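/- For j ∈ ℕ define η_j := (−1)^j·(binomial(2j, j))/4^j (the generalized binomial coefficient binom(−1/2, j)) and a_j := 2j + 1/2. Then for every real t > 0, ∫_t^∞ (1/√(πz))·(Σ_{j=0}^∞ η_j·a_j·exp(−(a_j²/2)·z)) dz = √(2/π)·Σ_{j=0}^∞ η_j·∫_{a_j²·t/2}^∞ x^{−1/2}·e^{−x} dx, where both the outer integral and both series converge. -/

import Mathlib

open MeasureTheory Real

/-- `η_j = binom(−1/2, j) = (−1)^j (2j choose j) / 4^j`. -/
noncomputable def eta (j : ℕ) : ℝ := (-1) ^ j * (Nat.choose (2 * j) j) / 4 ^ j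

/-- `a_j = 2j + 1/2`. -/
noncomputable def aC (j : ℕ) : ℝ := 2 * j + 1 / 2

open Set

lemma eta_abs_le (j : ℕ) : |eta j| ≤ 1 := by
  have h1 : (Nat.choose (2 * j) j : ℝ) ≤ 4 ^ j := by
    have h2 := Nat.choose_le_choose j (Nat.le_succ (2 * j))
    have h3 := Nat.choose_middle_le_pow j
    exact_mod_cast le_trans h2 h3
  rw [eta, abs_div, abs_mul, abs_pow, abs_neg, abs_one, one_pow, one_mul,
    abs_of_nonneg (by positivity : (0:ℝ) ≤ (Nat.choose (2*j) j : ℝ)),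
    abs_of_nonneg (by positivity : (0:ℝ) ≤ (4:ℝ)^j), div_le_one (by positivity)]
  exact h1

lemma two_div_sqrt_two_pi : 2 / Real.sqrt (2 * π) = Real.sqrt (2 / π) := by
  have hπ : 0 < π := pi_pos
  have h2 : (0:ℝ) < Real.sqrt 2 := Real.sqrt_pos.mpr (by norm_num)
  have hp : (0:ℝ) < Real.sqrt π := Real.sqrt_pos.mpr hπ
  rw [Real.sqrt_mul (by norm_num : (0:ℝ) ≤ 2), show (2:ℝ)/π = 2 * π⁻¹ by ring,
    Real.sqrt_mul (by norm_num : (0:ℝ) ≤ 2), Real.sqrt_inv]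
  rw [div_eq_iff (by positivity)]
  have := Real.mul_self_sqrt (by norm_num : (0:ℝ) ≤ 2)
  field_simp
  nlinarith [this]

lemma rpow_neg_half (x : ℝ) (hx : 0 < x) : x ^ (-(1:ℝ)/2) = (Real.sqrt x)⁻¹ := by
  rw [show -(1:ℝ)/2 = -(1/2) by ring, Real.rpow_neg hx.le, ← Real.sqrt_eq_rpow]

lemma termval (t : ℝ) (ht : 0 < t) (j : ℕ) :
    ∫ z in Ioi t, (1 / Real.sqrt (π * z)) * (eta j * aC j * Real.exp (-(aC j ^ 2 / 2) * z)) =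
      Real.sqrt (2 / π) * (eta j * ∫ x in Ioi (aC j ^ 2 * t / 2), x ^ (-(1:ℝ)/2) * Real.exp (-x)) := by
  have hπ : 0 < π := pi_pos
  have ha : 0 < aC j := by unfold aC; positivity
  set b := aC j ^ 2 / 2 with hb
  have hbpos : 0 < b := by positivity
  have key : EqOn (fun z => (1 / Real.sqrt (π * z)) * (eta j * aC j * Real.exp (-b * z)))
      (fun z => (eta j * (aC j ^ 2 / Real.sqrt (2 * π))) *
        ((b * z) ^ (-(1:ℝ)/2) * Real.exp (-(b * z)))) (Ioi t) := by
    intro z hz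
    have hz0 : 0 < z := ht.trans hz
    have hbz : 0 < b * z := by positivity
    simp only
    rw [rpow_neg_half _ hbz, Real.sqrt_mul hπ.le, Real.sqrt_mul hbpos.le z]
    have hsb : Real.sqrt b = aC j / Real.sqrt 2 := by
      rw [hb, show aC j ^ 2 / 2 = aC j ^ 2 * (2:ℝ)⁻¹ by ring,
        Real.sqrt_mul (by positivity), Real.sqrt_inv, Real.sqrt_sq ha.le]
      ring
    rw [hsb, Real.sqrt_mul (by norm_num : (0:ℝ) ≤ 2), neg_mul]
    have h2 : 0 < Real.sqrt 2 := Real.sqrt_pos.mpr (by norm_num)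
    have hp : 0 < Real.sqrt π := Real.sqrt_pos.mpr hπ
    have hzs : 0 < Real.sqrt z := Real.sqrt_pos.mpr hz0
    field_simp
  rw [setIntegral_congr_fun measurableSet_Ioi key, integral_comp_mul_left_Ioi (fun x => eta j * (aC j ^ 2 / Real.sqrt (2 * π)) * (x ^ (-(1:ℝ)/2) * Real.exp (-x))) t hbpos,
    smul_eq_mul, MeasureTheory.integral_const_mul]
  have hset : Ioi (b * t) = Ioi (aC j ^ 2 * t / 2) := by rw [hb]; ring_nf
  rw [hset]
  have hsp : 0 < Real.sqrt (2 * π) := Real.sqrt_pos.mpr (by positivity)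
  have hscal : b⁻¹ * (eta j * (aC j ^ 2 / Real.sqrt (2 * π))) = Real.sqrt (2 / π) * eta j := by
    rw [hb, ← two_div_sqrt_two_pi]
    field_simp
  calc b⁻¹ * (eta j * (aC j ^ 2 / Real.sqrt (2 * π)) *
        ∫ x in Ioi (aC j ^ 2 * t / 2), x ^ (-(1:ℝ)/2) * Real.exp (-x))
      = (b⁻¹ * (eta j * (aC j ^ 2 / Real.sqrt (2 * π)))) *
        ∫ x in Ioi (aC j ^ 2 * t / 2), x ^ (-(1:ℝ)/2) * Real.exp (-x) := by ring
    _ = Real.sqrt (2 / π) * (eta j * ∫ x in Ioi (aC j ^ 2 * t / 2), x ^ (-(1:ℝ)/2) * Real.exp (-x)) := by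
        rw [hscal]; ring

lemma hGa (u : ℝ) (hu : 0 < u) :
    IntegrableOn (fun x : ℝ => x ^ (-(1:ℝ)/2) * Real.exp (-x)) (Ioi u) := by
  have h := Real.GammaIntegral_convergent (by norm_num : (0:ℝ) < 1/2)
  refine (h.mono_set (Ioi_subset_Ioi hu.le)).congr_fun (fun x hx => ?_) measurableSet_Ioi
  rw [show (1:ℝ)/2 - 1 = -(1:ℝ)/2 by norm_num, mul_comm]

lemma hgeom (c : ℝ) (hc : 0 < c) :
    Summable (fun j : ℕ => (2 * (j:ℝ) + 1) * Real.exp (-(2 * c)) ^ j) := by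
  have hr : ‖Real.exp (-(2 * c))‖ < 1 := by
    rw [Real.norm_eq_abs, abs_of_pos (Real.exp_pos _)]
    exact Real.exp_lt_one_iff.mpr (by linarith)
  have h1 := summable_pow_mul_geometric_of_norm_lt_one 1 hr
  have h2 := summable_geometric_of_norm_lt_one hr
  exact ((h1.mul_left 2).add h2).congr fun j => by push_cast; ring

lemma haC_pos (j : ℕ) : 0 < aC j := by unfold aC; positivity

lemma hexp (j : ℕ) (z : ℝ) (hz : 0 < z) :
    Real.exp (-(aC j ^ 2 / 2) * z) ≤ Real.exp (-(z/8)) * Real.exp (-(2 * z)) ^ j := by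
  rw [← Real.exp_nat_mul, ← Real.exp_add]
  apply Real.exp_le_exp.mpr
  have hj : (0:ℝ) ≤ (j:ℝ) := Nat.cast_nonneg j
  unfold aC
  have hkey : (0:ℝ) ≤ (j:ℝ) * (2 * (j:ℝ) - 1) := by
    rcases Nat.eq_zero_or_pos j with h | h
    · simp [h]
    · have h1 : (1:ℝ) ≤ (j:ℝ) := Nat.one_le_cast.mpr h
      nlinarith
  nlinarith [mul_nonneg hkey hz.le]

lemma hgb (j : ℕ) (z : ℝ) (hz : 0 < z) :
    |eta j * aC j * Real.exp (-(aC j ^ 2 / 2) * z)| ≤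
      Real.exp (-(z/8)) * ((2 * (j:ℝ) + 1) * Real.exp (-(2 * z)) ^ j) := by
  rw [abs_mul, abs_mul, abs_of_pos (Real.exp_pos _), abs_of_pos (haC_pos j)]
  have h1 : |eta j| * aC j ≤ 2 * (j:ℝ) + 1 := by
    have he := eta_abs_le j
    have ha2 : aC j ≤ 2 * (j:ℝ) + 1 := by unfold aC; norm_num
    nlinarith [abs_nonneg (eta j), (haC_pos j).le]
  calc |eta j| * aC j * Real.exp (-(aC j ^ 2 / 2) * z)
      ≤ (2 * (j:ℝ) + 1) * (Real.exp (-(z/8)) * Real.exp (-(2 * z)) ^ j) := by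
        apply mul_le_mul h1 (hexp j z hz) (Real.exp_pos _).le (by positivity)
    _ = _ := by ring


set_option maxHeartbeats 1000000 in
/-- Analytic identity in the proof of Theorem 6.1 of Franchi–Paruolo: the tail
integral of the density `f_ζ` equals a series of upper incomplete Gamma terms
`√(2/π) Σ_j η_j Γ(1/2, a_j² t / 2)`; both series and the integral converge. -/
theorem stmt14 (t : ℝ) (ht : 0 < t) :
    (∀ z : ℝ, 0 < z →
      Summable fun j : ℕ => eta j * aC j * Real.exp (-((aC j) ^ 2 / 2) * z)) ∧
    (Summable fun j : ℕ =>
      eta j * ∫ x in Set.Ioi ((aC j) ^ 2 * t / 2), x ^ (-(1 : ℝ) / 2) * Real.exp (-x)) ∧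
    IntegrableOn
      (fun z => (1 / Real.sqrt (π * z)) *
        ∑' j : ℕ, eta j * aC j * Real.exp (-((aC j) ^ 2 / 2) * z)) (Set.Ioi t) ∧
    ∫ z in Set.Ioi t,
        (1 / Real.sqrt (π * z)) *
          ∑' j : ℕ, eta j * aC j * Real.exp (-((aC j) ^ 2 / 2) * z) =
      Real.sqrt (2 / π) *
        ∑' j : ℕ, eta j *
          ∫ x in Set.Ioi ((aC j) ^ 2 * t / 2), x ^ (-(1 : ℝ) / 2) * Real.exp (-x) := by
  have hπ : 0 < π := pi_pos
  -- summability of the density series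
  have hsum1 : ∀ z : ℝ, 0 < z →
      Summable fun j : ℕ => eta j * aC j * Real.exp (-(aC j ^ 2 / 2) * z) := by
    intro z hz
    apply Summable.of_abs
    exact Summable.of_nonneg_of_le (fun j => abs_nonneg _) (fun j => hgb j z hz)
      ((hgeom z hz).mul_left _)
  -- the summands as functions of z
  set F : ℕ → ℝ → ℝ :=
    fun j z => (1 / Real.sqrt (π * z)) * (eta j * aC j * Real.exp (-(aC j ^ 2 / 2) * z)) with hFdef
  have hFmeas : ∀ j, Measurable (F j) := by
    intro j
    apply Measurable.mul
    · simp_rw [one_div]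
      exact (Real.continuous_sqrt.measurable.comp (measurable_const.mul measurable_id)).inv
    · exact (Real.measurable_exp.comp ((measurable_id.const_mul _))).const_mul _
  -- the j-dependent constant in the dominating function
  set D : ℕ → ℝ :=
    fun j => (1 / Real.sqrt (π * t)) * ((2 * (j:ℝ) + 1) * Real.exp (-(2 * t)) ^ j) with hDdef
  have hD0 : ∀ j, 0 ≤ D j := fun j => by simp only [hDdef]; positivity
  have hIexp : IntegrableOn (fun z => Real.exp (-(z / 8))) (Set.Ioi t) := by
    refine ((exp_neg_integrableOn_Ioi t (by norm_num : (0:ℝ) < 1/8)).congr_fun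
      (fun z hz => ?_) measurableSet_Ioi)
    congr 1; ring
  have hI8 : ∫ z in Set.Ioi t, Real.exp (-(z / 8)) = 8 * Real.exp (-(t / 8)) := by
    have h := integral_comp_mul_left_Ioi (fun x => Real.exp (-x)) t
      (show (0:ℝ) < 8⁻¹ by norm_num)
    simp only [integral_exp_neg_Ioi, smul_eq_mul, inv_inv] at h
    calc ∫ z in Set.Ioi t, Real.exp (-(z / 8))
        = ∫ z in Set.Ioi t, Real.exp (-(8⁻¹ * z)) := by
          refine setIntegral_congr_fun measurableSet_Ioi (fun z hz => ?_)
          congr 1; ring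
      _ = 8 * Real.exp (-(t / 8)) := by rw [h]; congr 1; ring
  -- a.e. bound for each F j
  have habound : ∀ j, ∀ᵐ z ∂(volume.restrict (Set.Ioi t)),
      ‖F j z‖ ≤ D j * Real.exp (-(z / 8)) := by
    intro j
    rw [ae_restrict_iff' measurableSet_Ioi]
    filter_upwards with z hz
    have hz0 : 0 < z := ht.trans hz
    have h1 : 1 / Real.sqrt (π * z) ≤ 1 / Real.sqrt (π * t) := by
      apply one_div_le_one_div_of_le (Real.sqrt_pos.mpr (by positivity))
      exact Real.sqrt_le_sqrt (by nlinarith [le_of_lt (Set.mem_Ioi.mp hz)])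
    have h2 : |eta j * aC j * Real.exp (-(aC j ^ 2 / 2) * z)| ≤
        Real.exp (-(z / 8)) * ((2 * (j:ℝ) + 1) * Real.exp (-(2 * t)) ^ j) := by
      refine (hgb j z hz0).trans ?_
      have hzt : t < z := hz
      have hple : Real.exp (-(2 * z)) ^ j ≤ Real.exp (-(2 * t)) ^ j :=
        pow_le_pow_left₀ (Real.exp_pos _).le (Real.exp_le_exp.mpr (by linarith)) j
      exact mul_le_mul_of_nonneg_left
        (mul_le_mul_of_nonneg_left hple (by positivity)) (Real.exp_pos _).le
    calc ‖F j z‖ = (1 / Real.sqrt (π * z)) * |eta j * aC j * Real.exp (-(aC j ^ 2 / 2) * z)| := by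
          simp only [hFdef]
          rw [Real.norm_eq_abs, abs_mul,
            abs_of_nonneg (by positivity : (0:ℝ) ≤ 1 / Real.sqrt (π * z))]
      _ ≤ (1 / Real.sqrt (π * t)) *
            (Real.exp (-(z / 8)) * ((2 * (j:ℝ) + 1) * Real.exp (-(2 * t)) ^ j)) := by
          apply mul_le_mul h1 h2 (abs_nonneg _) (by positivity)
      _ = D j * Real.exp (-(z / 8)) := by simp only [hDdef]; ring
  have hFint : ∀ j, IntegrableOn (F j) (Set.Ioi t) := by
    intro j
    exact Integrable.mono' (hIexp.const_mul (D j)) ((hFmeas j).aestronglyMeasurable)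
      (habound j)
  -- summability of the integrals of norms
  have hnormint : ∀ j, ∫ z in Set.Ioi t, ‖F j z‖ ≤ D j * (8 * Real.exp (-(t / 8))) := by
    intro j
    have := integral_mono_of_nonneg (Filter.Eventually.of_forall fun z => norm_nonneg (F j z))
      (hIexp.const_mul (D j)) (habound j)
    calc ∫ z in Set.Ioi t, ‖F j z‖ ≤ ∫ z in Set.Ioi t, D j * Real.exp (-(z / 8)) := this
      _ = D j * (8 * Real.exp (-(t / 8))) := by rw [MeasureTheory.integral_const_mul, hI8]
  have hFsumnorm : Summable fun j => ∫ z in Set.Ioi t, ‖F j z‖ := by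
    apply Summable.of_nonneg_of_le
      (fun j => integral_nonneg fun z => norm_nonneg _) hnormint
    have : Summable fun j : ℕ => ((1 / Real.sqrt (π * t)) * (8 * Real.exp (-(t / 8)))) *
        ((2 * (j:ℝ) + 1) * Real.exp (-(2 * t)) ^ j) := (hgeom t ht).mul_left _
    exact this.congr fun j => by simp only [hDdef]; ring
  have hhs := hasSum_integral_of_summable_integral_norm hFint hFsumnorm
  -- second summability claim
  have hS2 : Summable fun j : ℕ =>
      eta j * ∫ x in Set.Ioi (aC j ^ 2 * t / 2), x ^ (-(1:ℝ)/2) * Real.exp (-x) := by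
    have hs := hhs.summable
    have hs2 : Summable fun j : ℕ => Real.sqrt (2 / π) *
        (eta j * ∫ x in Set.Ioi (aC j ^ 2 * t / 2), x ^ (-(1:ℝ)/2) * Real.exp (-x)) :=
      hs.congr fun j => termval t ht j
    have hc : (0:ℝ) < Real.sqrt (2 / π) := Real.sqrt_pos.mpr (by positivity)
    refine (hs2.mul_left (Real.sqrt (2 / π))⁻¹).congr fun j => ?_
    rw [← mul_assoc, inv_mul_cancel₀ hc.ne', one_mul]
  -- integrability of the full density
  set S : ℝ := ∑' j : ℕ, ((2 * (j:ℝ) + 1) * Real.exp (-(2 * t)) ^ j) with hSdef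
  have hS0 : 0 ≤ S := tsum_nonneg fun j => by positivity
  have htsum_eq : ∀ z : ℝ, (1 / Real.sqrt (π * z)) *
      ∑' j : ℕ, eta j * aC j * Real.exp (-(aC j ^ 2 / 2) * z) = ∑' j : ℕ, F j z := by
    intro z
    simp only [hFdef]
    exact (tsum_mul_left).symm
  have hIntOn : IntegrableOn
      (fun z => (1 / Real.sqrt (π * z)) *
        ∑' j : ℕ, eta j * aC j * Real.exp (-(aC j ^ 2 / 2) * z)) (Set.Ioi t) := by
    apply Integrable.mono' (hIexp.const_mul ((1 / Real.sqrt (π * t)) * S))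
    · apply aestronglyMeasurable_of_tendsto_ae (u := Filter.atTop)
        (f := fun n z => ∑ j ∈ Finset.range n, F j z)
      · intro n
        exact (Finset.measurable_sum _ fun j _ => hFmeas j).aestronglyMeasurable
      · rw [ae_restrict_iff' measurableSet_Ioi]
        filter_upwards with z hz
        have hz0 : 0 < z := ht.trans hz
        have hsz : Summable fun j : ℕ => F j z := by
          simp only [hFdef]
          exact (hsum1 z hz0).mul_left _
        rw [htsum_eq z]
        exact hsz.hasSum.tendsto_sum_nat
    · rw [ae_restrict_iff' measurableSet_Ioi]
      filter_upwards with z hz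
      have hz0 : 0 < z := ht.trans hz
      have habs : Summable fun j : ℕ => |eta j * aC j * Real.exp (-(aC j ^ 2 / 2) * z)| :=
        Summable.of_nonneg_of_le (fun j => abs_nonneg _) (fun j => hgb j z hz0)
          ((hgeom z hz0).mul_left _)
      have hbig : Summable fun j : ℕ =>
          Real.exp (-(z / 8)) * ((2 * (j:ℝ) + 1) * Real.exp (-(2 * t)) ^ j) :=
        (hgeom t ht).mul_left _
      have hterm : ∀ j : ℕ, |eta j * aC j * Real.exp (-(aC j ^ 2 / 2) * z)| ≤
          Real.exp (-(z / 8)) * ((2 * (j:ℝ) + 1) * Real.exp (-(2 * t)) ^ j) := by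
        intro j
        refine (hgb j z hz0).trans ?_
        have hzt : t < z := hz
        have hple : Real.exp (-(2 * z)) ^ j ≤ Real.exp (-(2 * t)) ^ j :=
          pow_le_pow_left₀ (Real.exp_pos _).le (Real.exp_le_exp.mpr (by linarith)) j
        exact mul_le_mul_of_nonneg_left
          (mul_le_mul_of_nonneg_left hple (by positivity)) (Real.exp_pos _).le
      have hts : |∑' j : ℕ, eta j * aC j * Real.exp (-(aC j ^ 2 / 2) * z)| ≤
          Real.exp (-(z / 8)) * S := by
        calc |∑' j : ℕ, eta j * aC j * Real.exp (-(aC j ^ 2 / 2) * z)|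
            ≤ ∑' j : ℕ, |eta j * aC j * Real.exp (-(aC j ^ 2 / 2) * z)| := by
              have habs' : Summable fun j : ℕ =>
                  ‖eta j * aC j * Real.exp (-(aC j ^ 2 / 2) * z)‖ := by
                simpa only [Real.norm_eq_abs] using habs
              have h := norm_tsum_le_tsum_norm habs'
              simpa only [Real.norm_eq_abs] using h
          _ ≤ ∑' j : ℕ, Real.exp (-(z / 8)) * ((2 * (j:ℝ) + 1) * Real.exp (-(2 * t)) ^ j) :=
              Summable.tsum_le_tsum hterm habs hbig
          _ = Real.exp (-(z / 8)) * S := by rw [hSdef, tsum_mul_left]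
      have h1 : 1 / Real.sqrt (π * z) ≤ 1 / Real.sqrt (π * t) := by
        apply one_div_le_one_div_of_le (Real.sqrt_pos.mpr (by positivity))
        exact Real.sqrt_le_sqrt (by nlinarith [le_of_lt (Set.mem_Ioi.mp hz)])
      calc ‖(1 / Real.sqrt (π * z)) *
            ∑' j : ℕ, eta j * aC j * Real.exp (-(aC j ^ 2 / 2) * z)‖
          = (1 / Real.sqrt (π * z)) *
            |∑' j : ℕ, eta j * aC j * Real.exp (-(aC j ^ 2 / 2) * z)| := by
            rw [Real.norm_eq_abs, abs_mul,
              abs_of_nonneg (by positivity : (0:ℝ) ≤ 1 / Real.sqrt (π * z))]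
        _ ≤ (1 / Real.sqrt (π * t)) * (Real.exp (-(z / 8)) * S) := by
            apply mul_le_mul h1 hts (abs_nonneg _) (by positivity)
        _ = (1 / Real.sqrt (π * t)) * S * Real.exp (-(z / 8)) := by ring
  -- final identity
  have heq : ∫ z in Set.Ioi t, (1 / Real.sqrt (π * z)) *
        ∑' j : ℕ, eta j * aC j * Real.exp (-(aC j ^ 2 / 2) * z) =
      Real.sqrt (2 / π) * ∑' j : ℕ, eta j *
        ∫ x in Set.Ioi (aC j ^ 2 * t / 2), x ^ (-(1:ℝ)/2) * Real.exp (-x) := by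
    calc ∫ z in Set.Ioi t, (1 / Real.sqrt (π * z)) *
          ∑' j : ℕ, eta j * aC j * Real.exp (-(aC j ^ 2 / 2) * z)
        = ∫ z in Set.Ioi t, ∑' j : ℕ, F j z := by
          refine setIntegral_congr_fun measurableSet_Ioi (fun z hz => ?_)
          exact htsum_eq z
      _ = ∑' j : ℕ, ∫ z in Set.Ioi t, F j z := hhs.tsum_eq.symm
      _ = ∑' j : ℕ, Real.sqrt (2 / π) *
            (eta j * ∫ x in Set.Ioi (aC j ^ 2 * t / 2), x ^ (-(1:ℝ)/2) * Real.exp (-x)) :=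
          tsum_congr fun j => termval t ht j
      _ = Real.sqrt (2 / π) * ∑' j : ℕ, eta j *
            ∫ x in Set.Ioi (aC j ^ 2 * t / 2), x ^ (-(1:ℝ)/2) * Real.exp (-x) := tsum_mul_left
  exact ⟨hsum1, hS2, hIntOn, heq⟩
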